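/- Let U be an upper bound for C_opt(G), let S_i := 2^{−i}·U/(2n) for i ∈ ℕ, let b ∈ ℕ with b ≥ 1, and let i* be the least index with C_opt(G↓S_{i*}) > b (assume such an index exists). Define L' := b·S_{i*}, and U' := U if i* = 0 and U' := 2·S_{i*}·(b + n) if i* > 0. Then L' ≤ C_opt(G) ≤ U' and U'/L' ≤ 2 + 2n/b. -/

import Mathlib

def IsWalk {V E : Type} (tl hd : E → V) : V → V → List E → Prop
  | u, v, [] => u = v
  | u, v, e :: es => tl e = u ∧ IsWalk tl hd (hd e) v es

def IsPath {V E : Type} (tl hd : E → V) (u v : V) (p : List E) : Prop :=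
  IsWalk tl hd u v p ∧ (u :: p.map hd).Nodup

lemma sum_map_div' {E : Type} (p : List E) (c : E → ℝ) (S : ℝ) :
    (p.map fun e => c e / S).sum = (p.map c).sum / S := by
  induction p with
  | nil => simp
  | cons e es ih => simp [ih, add_div]

lemma sum_map_mul_add_one' {E : Type} (p : List E) (f : E → ℝ) (S : ℝ) :
    (p.map fun e => S * (f e + 1)).sum = S * ((p.map f).sum + p.length) := by
  induction p with
  | nil => simp
  | cons e es ih => simp [ih]; ring

theorem stmt_9 {V E : Type} [Fintype V] [Fintype E]
    (tl hd : E → V) (c r : E → ℝ)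
    (hc : ∀ e, 0 ≤ c e) (hr : ∀ e, 0 ≤ r e)
    (hn : 2 ≤ Fintype.card V)
    (s t : V) (hst : s ≠ t) (R : ℝ) (hR : 0 ≤ R)
    (Copt : ℝ) (hCpos : 0 < Copt)
    (hCopt₁ : ∃ p, IsPath tl hd s t p ∧ (p.map r).sum ≤ R ∧ (p.map c).sum = Copt)
    (hCopt₂ : ∀ p, IsPath tl hd s t p → (p.map r).sum ≤ R → Copt ≤ (p.map c).sum)
    (U : ℝ) (hU : Copt ≤ U)
    (S : ℕ → ℝ)
    (hS : ∀ i : ℕ, S i = (2 : ℝ) ^ (-(i : ℤ)) * U / (2 * Fintype.card V))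
    (Cf : ℕ → ℝ)
    (hCf₁ : ∀ i : ℕ, ∃ p, IsPath tl hd s t p ∧ (p.map r).sum ≤ R ∧
      (p.map fun e => (⌊c e / S i⌋ : ℝ)).sum = Cf i)
    (hCf₂ : ∀ i : ℕ, ∀ p, IsPath tl hd s t p → (p.map r).sum ≤ R →
      Cf i ≤ (p.map fun e => (⌊c e / S i⌋ : ℝ)).sum)
    (b : ℕ) (hb : 1 ≤ b)
    (istar : ℕ) (histar : (b : ℝ) < Cf istar)
    (hleast : ∀ j : ℕ, j < istar → Cf j ≤ (b : ℝ))
    (L' U' : ℝ) (hL' : L' = b * S istar)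
    (hU' : U' = if istar = 0 then U else 2 * S istar * (b + Fintype.card V)) :
    L' ≤ Copt ∧ Copt ≤ U' ∧ U' / L' ≤ 2 + 2 * Fintype.card V / b := by
  have hU0 : 0 < U := lt_of_lt_of_le hCpos hU
  have hncard : (2 : ℝ) ≤ Fintype.card V := by exact_mod_cast hn
  have hncard0 : (0 : ℝ) < Fintype.card V := by linarith
  have hSpos : ∀ i, 0 < S i := fun i => by
    rw [hS]; positivity
  have hb0 : (0 : ℝ) < b := by exact_mod_cast hb
  have hlen : ∀ p : List E, IsPath tl hd s t p → (p.length : ℝ) ≤ Fintype.card V := by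
    intro p hp
    have h1 := List.Nodup.length_le_card hp.2
    simp only [List.length_cons, List.length_map] at h1
    have : p.length ≤ Fintype.card V := by omega
    exact_mod_cast this
  -- lower bound
  have hlow : L' ≤ Copt := by
    obtain ⟨p, hp, hpr, hpc⟩ := hCopt₁
    have h1 := hCf₂ istar p hp hpr
    have h2 : (p.map fun e => (⌊c e / S istar⌋ : ℝ)).sum ≤ (p.map c).sum / S istar := by
      rw [← sum_map_div']
      exact List.sum_le_sum fun e _ => Int.floor_le _
    have h3 : (b : ℝ) < Copt / S istar := by
      rw [← hpc]; exact lt_of_lt_of_le histar (h1.trans h2)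
    have := (lt_div_iff₀ (hSpos istar)).mp h3
    rw [hL']; linarith
  -- generic upper bound
  have hupper : ∀ i, Copt ≤ S i * (Cf i + Fintype.card V) := by
    intro i
    obtain ⟨p, hp, hpr, hpc⟩ := hCf₁ i
    have h1 := hCopt₂ p hp hpr
    have h2 : (p.map c).sum ≤
        (p.map fun e => S i * ((⌊c e / S i⌋ : ℝ) + 1)).sum := by
      refine List.sum_le_sum fun e _ => ?_
      have hf := Int.lt_floor_add_one (c e / S i)
      have := (div_lt_iff₀ (hSpos i)).mp hf
      nlinarith
    rw [sum_map_mul_add_one'] at h2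
    have h3 := hlen p hp
    have hS0 := (hSpos i).le
    calc Copt ≤ (p.map c).sum := h1
      _ ≤ S i * ((p.map fun e => (⌊c e / S i⌋ : ℝ)).sum + p.length) := h2
      _ ≤ S i * (Cf i + Fintype.card V) := by rw [hpc]; nlinarith
  refine ⟨hlow, ?_, ?_⟩
  · -- Copt ≤ U'
    rcases Nat.eq_zero_or_pos istar with h0 | hpos
    · rw [hU', if_pos h0]; exact hU
    · rw [hU', if_neg (Nat.pos_iff_ne_zero.mp hpos)]
      obtain ⟨j, rfl⟩ := Nat.exists_eq_succ_of_ne_zero (Nat.pos_iff_ne_zero.mp hpos)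
      have hSj : S j = 2 * S (j + 1) := by
        rw [hS, hS]
        have : (2 : ℝ) ^ (-(j : ℤ)) = 2 * (2 : ℝ) ^ (-((j + 1 : ℕ) : ℤ)) := by
          push_cast
          rw [neg_add, zpow_add₀ (two_ne_zero), zpow_neg_one]
          ring
        rw [this]; ring
      have h1 := hupper j
      have h2 := hleast j (Nat.lt_succ_self j)
      have hS0 := (hSpos j).le
      calc Copt ≤ S j * (Cf j + Fintype.card V) := h1
        _ ≤ S j * (b + Fintype.card V) := by nlinarith
        _ = 2 * S (j + 1) * (b + Fintype.card V) := by rw [hSj]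
  · -- ratio
    rcases Nat.eq_zero_or_pos istar with h0 | hpos
    · subst h0
      rw [hU', if_pos rfl, hL', hS 0]
      simp only [Nat.cast_zero, neg_zero, zpow_zero, one_mul]
      rw [div_le_iff₀ (by positivity)]
      have : U / (2 * (Fintype.card V : ℝ)) > 0 := by positivity
      field_simp
      nlinarith [mul_pos (mul_pos hb0 hb0) hU0]
    · rw [hU', if_neg (Nat.pos_iff_ne_zero.mp hpos), hL']
      have hSi := hSpos istar
      rw [div_le_iff₀ (by positivity)]
      field_simp
      nlinarith
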